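/- For the grid graph P_m □ P_n with 2 ≤ m ≤ n, fμ¹(P_m □ P_n) = m. In particular the diagonal set {(i,i) : i ∈ [m]} is a 1-ftmv set. -/

import Mathlib

open SimpleGraph

variable {V : Type*}

/-- `X` is a `k`-fault-tolerant mutual-visibility set of `G`: for any two distinct
non-adjacent vertices `u v ∈ X` there are `k+1` internally disjoint shortest
`u,v`-paths whose only vertices in `X` are `u` and `v`. -/
def IsFtmvSet (G : SimpleGraph V) (k : ℕ) (X : Set V) : Prop :=
  ∀ u ∈ X, ∀ v ∈ X, u ≠ v → ¬ G.Adj u v →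
    ∃ P : Fin (k + 1) → G.Path u v,
      (∀ i, (P i).1.length = G.dist u v) ∧
      (∀ i, ∀ w ∈ (P i).1.support, w ∈ X → w = u ∨ w = v) ∧
      (∀ i j, i ≠ j → ∀ w, w ∈ (P i).1.support → w ∈ (P j).1.support → w = u ∨ w = v)

/-- The `k`-fault-tolerant mutual-visibility number: maximum cardinality of a `k`-ftmv set. -/
noncomputable def ftmvNum (G : SimpleGraph V) (k : ℕ) : ℕ :=
  sSup {n | ∃ X : Set V, IsFtmvSet G k X ∧ X.ncard = n}

/-- The clique number of `G`. -/
noncomputable def cliqueNum' (G : SimpleGraph V) : ℕ :=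
  sSup {n | ∃ s : Finset V, G.IsNClique n s}

namespace FtmvAux

open SimpleGraph.Walk

variable {m n : ℕ}

def upWalk (N : ℕ) : (a : ℕ) → (k : ℕ) → (h : a + k < N) →
    (pathGraph N).Walk ⟨a, by omega⟩ ⟨a + k, h⟩
  | a, 0, h => Walk.nil.copy rfl (by ext; simp)
  | a, k+1, h => (Walk.cons
      (show (pathGraph N).Adj ⟨a, by omega⟩ ⟨a+1, by omega⟩ by rw [pathGraph_adj]; left; rfl)
      (upWalk N (a+1) k (by omega))).copy rfl (by ext; simp; omega)

lemma length_upWalk (N a k : ℕ) (h : a + k < N) : (upWalk N a k h).length = k := by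
  induction k generalizing a with
  | zero => simp [upWalk]
  | succ k ih => simp [upWalk, ih]

lemma support_upWalk (N a k : ℕ) (h : a + k < N) :
    ∀ x ∈ (upWalk N a k h).support, a ≤ x.val ∧ x.val ≤ a + k := by
  induction k generalizing a with
  | zero => simp [upWalk]
  | succ k ih =>
    intro x hx
    simp only [upWalk, support_copy, support_cons, List.mem_cons] at hx
    rcases hx with rfl | hx
    · simp
    · have := ih (a+1) (by omega) x hx; omega

lemma nodup_upWalk (N a k : ℕ) (h : a + k < N) : (upWalk N a k h).support.Nodup := by
  induction k generalizing a with
  | zero => simp [upWalk]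
  | succ k ih =>
    simp only [upWalk, support_copy, support_cons, List.nodup_cons]
    refine ⟨fun hx => ?_, ih (a+1) (by omega)⟩
    have := support_upWalk N (a+1) k (by omega) _ hx
    simp at this

def segWalk {N : ℕ} (a b : Fin N) : (pathGraph N).Walk a b :=
  if h : a.val ≤ b.val then
    (upWalk N a.val (b.val - a.val) (by omega)).copy (by ext; simp) (by ext; simp; omega)
  else
    ((upWalk N b.val (a.val - b.val) (by omega)).copy (by ext; simp) (by ext; simp; omega)).reverse

lemma length_segWalk {N : ℕ} (a b : Fin N) : (segWalk a b).length = Nat.dist a.val b.val := by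
  unfold segWalk
  split <;> simp [length_upWalk, Nat.dist] <;> omega

lemma nodup_segWalk {N : ℕ} (a b : Fin N) : (segWalk a b).support.Nodup := by
  unfold segWalk
  split <;> simp [support_reverse, nodup_upWalk]

abbrev GG (m n : ℕ) := pathGraph m □ pathGraph n

def hWalk (i : Fin m) (a b : Fin n) : (GG m n).Walk (i,a) (i,b) :=
  Walk.boxProdRight (pathGraph m) i (segWalk a b)

def vWalk (a : Fin n) (i j : Fin m) : (GG m n).Walk (i,a) (j,a) :=
  Walk.boxProdLeft (H := pathGraph n) a (segWalk i j)

lemma hWalk_support (i : Fin m) (a b : Fin n) :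
    (hWalk i a b).support = (segWalk a b).support.map (fun x => (i, x)) := by
  exact Walk.support_map _ _

lemma vWalk_support (a : Fin n) (i j : Fin m) :
    (vWalk a i j).support = (segWalk i j).support.map (fun x => (x, a)) := by
  exact Walk.support_map _ _

lemma hWalk_length (i : Fin m) (a b : Fin n) : (hWalk i a b).length = Nat.dist a.val b.val := by
  exact (Walk.length_map _ _).trans (length_segWalk a b)

lemma vWalk_length (a : Fin n) (i j : Fin m) : (vWalk a i j).length = Nat.dist i.val j.val := by
  exact (Walk.length_map _ _).trans (length_segWalk i j)

lemma hWalk_nodup (i : Fin m) (a b : Fin n) : (hWalk i a b).support.Nodup := by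
  rw [hWalk_support]
  exact (nodup_segWalk a b).map (fun x y h => by simpa using congrArg Prod.snd h)

lemma vWalk_nodup (a : Fin n) (i j : Fin m) : (vWalk a i j).support.Nodup := by
  rw [vWalk_support]
  exact (nodup_segWalk i j).map (fun x y h => by simpa using congrArg Prod.fst h)

lemma hWalk_row (i : Fin m) (a b : Fin n) : ∀ x ∈ (hWalk i a b).support, x.1 = i := by
  intro x hx; rw [hWalk_support] at hx
  simp only [List.mem_map] at hx; obtain ⟨y, _, rfl⟩ := hx; rfl

lemma vWalk_col (a : Fin n) (i j : Fin m) : ∀ x ∈ (vWalk a i j).support, x.2 = a := by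
  intro x hx; rw [vWalk_support] at hx
  simp only [List.mem_map] at hx; obtain ⟨y, _, rfl⟩ := hx; rfl

lemma grid_walk_length_lower {x y : Fin m × Fin n} (w : (GG m n).Walk x y) :
    Nat.dist x.1.val y.1.val + Nat.dist x.2.val y.2.val ≤ w.length := by
  induction w with
  | nil => simp
  | @cons u z y h p ih =>
    rw [length_cons]
    rcases h with ⟨h1, h2⟩ | ⟨h1, h2⟩
    · rw [pathGraph_adj] at h1
      have hd : Nat.dist u.1.val z.1.val ≤ 1 := by simp [Nat.dist]; omega
      have t1 : Nat.dist u.1.val y.1.val ≤ Nat.dist u.1.val z.1.val + Nat.dist z.1.val y.1.val :=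
        Nat.dist.triangle_inequality _ _ _
      have t2 : Nat.dist u.2.val y.2.val = Nat.dist z.2.val y.2.val := by rw [h2]
      omega
    · rw [pathGraph_adj] at h1
      have hd : Nat.dist u.2.val z.2.val ≤ 1 := by simp [Nat.dist]; omega
      have t1 : Nat.dist u.2.val y.2.val ≤ Nat.dist u.2.val z.2.val + Nat.dist z.2.val y.2.val :=
        Nat.dist.triangle_inequality _ _ _
      have t2 : Nat.dist u.1.val y.1.val = Nat.dist z.1.val y.1.val := by rw [h2]
      omega

lemma grid_dist (x y : Fin m × Fin n) :
    (GG m n).dist x y = Nat.dist x.1.val y.1.val + Nat.dist x.2.val y.2.val := by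
  obtain ⟨i, a⟩ := x; obtain ⟨j, b⟩ := y
  have hlen : ((hWalk i a b).append (vWalk b i j)).length
      = Nat.dist i.val j.val + Nat.dist a.val b.val := by
    rw [length_append, hWalk_length, vWalk_length]; omega
  refine le_antisymm ?_ ?_
  · calc (GG m n).dist (i,a) (j,b) ≤ _ := SimpleGraph.dist_le _
      _ = _ := hlen
  · have hr : (GG m n).Reachable (i,a) (j,b) := ⟨(hWalk i a b).append (vWalk b i j)⟩
    obtain ⟨p, hp⟩ := hr.exists_walk_length_eq_dist
    calc Nat.dist i.val j.val + Nat.dist a.val b.val ≤ p.length := grid_walk_length_lower p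
      _ = _ := hp

lemma grid_dist' (i j : Fin m) (a b : Fin n) :
    (GG m n).dist (i,a) (j,b) = Nat.dist i.val j.val + Nat.dist a.val b.val :=
  grid_dist _ _

lemma second_vertex {W : Type*} {G : SimpleGraph W} {u v : W} (w : G.Walk u v)
    (hl : w.length = G.dist u v) (hne : u ≠ v) :
    ∃ s ∈ w.support, G.Adj u s ∧ G.dist s v + 1 = G.dist u v := by
  cases w with
  | nil => exact absurd rfl hne
  | @cons _ s _ h p =>
    refine ⟨s, by simp, h, ?_⟩
    have h1 : G.dist s v ≤ p.length := SimpleGraph.dist_le p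
    have hr : G.Reachable s v := ⟨p⟩
    obtain ⟨q, hq⟩ := hr.exists_walk_length_eq_dist
    have h2 : G.dist u v ≤ (Walk.cons h q).length := SimpleGraph.dist_le _
    rw [length_cons, hq] at h2
    rw [length_cons] at hl
    omega

lemma grid_adj_val {x y : Fin m × Fin n} : (GG m n).Adj x y ↔
    (x.1.val = y.1.val ∧ Nat.dist x.2.val y.2.val = 1) ∨
    (x.2.val = y.2.val ∧ Nat.dist x.1.val y.1.val = 1) := by
  rw [boxProd_adj, pathGraph_adj, pathGraph_adj]
  constructor
  · rintro (⟨h1, h2⟩ | ⟨h1, h2⟩)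
    · right
      have : x.2.val = y.2.val := by rw [h2]
      simp [Nat.dist]; omega
    · left
      have : x.1.val = y.1.val := by rw [h2]
      simp [Nat.dist]; omega
  · rintro (⟨h1, h2⟩ | ⟨h1, h2⟩)
    · right
      refine ⟨?_, Fin.ext h1⟩
      simp [Nat.dist] at h2; omega
    · left
      refine ⟨?_, Fin.ext h1⟩
      simp [Nat.dist] at h2; omega

/-- The second vertex of a shortest walk in the grid, in numeric terms. -/
lemma second_vertex_grid {u v : Fin m × Fin n} (w : (GG m n).Walk u v)
    (hl : w.length = (GG m n).dist u v) (hne : u ≠ v) :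
    ∃ s ∈ w.support,
      ((s.1.val = u.1.val ∧ Nat.dist s.2.val u.2.val = 1) ∨
        (s.2.val = u.2.val ∧ Nat.dist s.1.val u.1.val = 1)) ∧
      Nat.dist s.1.val v.1.val + Nat.dist s.2.val v.2.val + 1
        = Nat.dist u.1.val v.1.val + Nat.dist u.2.val v.2.val := by
  obtain ⟨s, hmem, hadj, hdist⟩ := second_vertex w hl hne
  refine ⟨s, hmem, ?_, ?_⟩
  · rw [grid_adj_val] at hadj
    rcases hadj with ⟨h1, h2⟩ | ⟨h1, h2⟩
    · exact Or.inl ⟨h1.symm, by rw [Nat.dist_comm]; exact h2⟩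
    · exact Or.inr ⟨h1.symm, by rw [Nat.dist_comm]; exact h2⟩
  · rw [grid_dist, grid_dist] at hdist; exact hdist

lemma prod_fin_eq {x y : Fin m × Fin n} (h1 : x.1.val = y.1.val) (h2 : x.2.val = y.2.val) :
    x = y := Prod.ext (Fin.ext h1) (Fin.ext h2)

/-- Arithmetic helper for Lemma A. -/
lemma arithA {x1 y1 x2 y2 s1 s2 : ℕ} (hrow : x1 = y1) (hd2 : 2 ≤ Nat.dist x2 y2)
    (ha : (s1 = x1 ∧ Nat.dist s2 x2 = 1) ∨ (s2 = x2 ∧ Nat.dist s1 x1 = 1))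
    (hd : Nat.dist s1 y1 + Nat.dist s2 y2 + 1 = Nat.dist x1 y1 + Nat.dist x2 y2) :
    s1 = x1 ∧ ((x2 < y2 ∧ s2 = x2 + 1) ∨ (y2 < x2 ∧ s2 + 1 = x2)) := by
  subst hrow
  simp only [Nat.dist] at hd2 ha hd
  rcases ha with ⟨h1, h2⟩ | ⟨h1, h2⟩
  · subst h1
    refine ⟨rfl, ?_⟩
    omega
  · exfalso
    subst h1
    omega

/-- Arithmetic helper for Lemma B. -/
lemma arithB {x1 c1 z1 x2 c2 z2 s1 s2 : ℕ}
    (hrow : x1 = c1) (hADJ : Nat.dist x2 c2 = 1) (hzrow : z1 ≠ x1)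
    (hFAR : Nat.dist x2 z2 = Nat.dist c2 z2 + 1)
    (hnx : s1 ≠ c1 ∨ s2 ≠ c2)
    (ha : (s1 = x1 ∧ Nat.dist s2 x2 = 1) ∨ (s2 = x2 ∧ Nat.dist s1 x1 = 1))
    (hd : Nat.dist s1 z1 + Nat.dist s2 z2 + 1 = Nat.dist x1 z1 + Nat.dist x2 z2) :
    s2 = x2 ∧ s1 ≠ x1 ∧ ((z1 < x1 ∧ s1 + 1 = x1) ∨ (x1 < z1 ∧ s1 = x1 + 1)) := by
  subst hrow
  simp only [Nat.dist] at hADJ hFAR ha hd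
  rcases ha with ⟨h1, h2⟩ | ⟨h1, h2⟩
  · exfalso
    subst h1
    omega
  · subst h1
    refine ⟨rfl, ?_, ?_⟩ <;> omega

/-- Lemma A: two distinct same-row vertices of a 1-ftmv set are column-adjacent. -/
lemma lemA {X : Set (Fin m × Fin n)} (hX : IsFtmvSet (GG m n) 1 X)
    {x y : Fin m × Fin n} (hx : x ∈ X) (hy : y ∈ X) (hxy : x ≠ y) (hrow : x.1.val = y.1.val) :
    Nat.dist x.2.val y.2.val = 1 := by
  by_contra hd
  have hcol : x.2.val ≠ y.2.val := fun h => hxy (prod_fin_eq hrow h)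
  have hd2 : 2 ≤ Nat.dist x.2.val y.2.val := by simp only [Nat.dist] at hd ⊢; omega
  have hnadj : ¬ (GG m n).Adj x y := by
    rw [grid_adj_val]; rintro (⟨h1, h2⟩ | ⟨h1, h2⟩)
    · omega
    · exact hcol h1
  obtain ⟨P, hlen, hX2, hdisj⟩ := hX x hx y hy hxy hnadj
  obtain ⟨s0, hm0, ha0, hd0⟩ := second_vertex_grid (P 0).1 (hlen 0) hxy
  obtain ⟨s1, hm1, ha1, hd1⟩ := second_vertex_grid (P 1).1 (hlen 1) hxy
  obtain ⟨e0, f0⟩ := arithA hrow hd2 ha0 hd0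
  obtain ⟨e1, f1⟩ := arithA hrow hd2 ha1 hd1
  have hs01 : s0 = s1 := prod_fin_eq (by omega) (by omega)
  have hsx : s0 ≠ x := by
    intro h; rw [h] at f0; omega
  have hsy : s0 ≠ y := by
    intro h
    rw [h] at e0 f0
    have hd2' := hd2
    simp only [Nat.dist] at hd2'
    omega
  rcases hdisj 0 1 (by decide) s0 hm0 (hs01 ▸ hm1) with h | h
  · exact hsx h
  · exact hsy h

/-- Lemma B': directed version. -/
lemma lemB' {X : Set (Fin m × Fin n)} (hX : IsFtmvSet (GG m n) 1 X)
    {x x' z : Fin m × Fin n} (hx : x ∈ X) (hx' : x' ∈ X) (hz : z ∈ X)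
    (hrow : x.1.val = x'.1.val) (hadj : Nat.dist x.2.val x'.2.val = 1)
    (hzrow : z.1.val ≠ x.1.val)
    (hfar : Nat.dist x.2.val z.2.val = Nat.dist x'.2.val z.2.val + 1) : False := by
  have hADJ := hadj
  have hFAR := hfar
  simp only [Nat.dist] at hADJ hFAR
  have hne : x ≠ z := fun h => hzrow (by rw [h])
  have hnadj : ¬ (GG m n).Adj x z := by
    rw [grid_adj_val]; rintro (⟨h1, h2⟩ | ⟨h1, h2⟩)
    · exact hzrow h1.symm
    · simp only [Nat.dist] at h2; omega
  obtain ⟨P, hlen, hX2, hdisj⟩ := hX x hx z hz hne hnadj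
  have key : ∀ t : Fin 2, ∃ s ∈ (P t).1.support,
      s.2.val = x.2.val ∧ s.1.val ≠ x.1.val ∧
      ((z.1.val < x.1.val ∧ s.1.val + 1 = x.1.val) ∨
        (x.1.val < z.1.val ∧ s.1.val = x.1.val + 1)) := by
    intro t
    obtain ⟨s, hm, ha, hd⟩ := second_vertex_grid (P t).1 (hlen t) hne
    have hsnx' : s ≠ x' := by
      intro h
      subst h
      rcases hX2 t _ hm hx' with h2 | h2
      · rw [h2] at hadj; simp [Nat.dist] at hadj
      · rw [h2] at hrow; exact hzrow hrow.symm
    have hnx' : s.1.val ≠ x'.1.val ∨ s.2.val ≠ x'.2.val := by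
      by_contra hcon
      push_neg at hcon
      exact hsnx' (prod_fin_eq hcon.1 hcon.2)
    exact ⟨s, hm, arithB hrow hadj hzrow hfar hnx' ha hd⟩
  obtain ⟨s0, hm0, hc0, hr0, ho0⟩ := key 0
  obtain ⟨s1, hm1, hc1, hr1, ho1⟩ := key 1
  have hs01 : s0 = s1 := prod_fin_eq (by omega) (by omega)
  have hsx : s0 ≠ x := fun h => hr0 (by rw [h])
  have hsz : s0 ≠ z := by
    intro h; rw [h] at hc0; omega
  rcases hdisj 0 1 (by decide) s0 hm0 (hs01 ▸ hm1) with h | h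
  · exact hsx h
  · exact hsz h

lemma lemB {X : Set (Fin m × Fin n)} (hX : IsFtmvSet (GG m n) 1 X)
    {x x' z : Fin m × Fin n} (hx : x ∈ X) (hx' : x' ∈ X) (hz : z ∈ X)
    (hrow : x.1.val = x'.1.val) (hadj : Nat.dist x.2.val x'.2.val = 1)
    (hzrow : z.1.val ≠ x.1.val) : False := by
  have : Nat.dist x.2.val z.2.val = Nat.dist x'.2.val z.2.val + 1 ∨
      Nat.dist x'.2.val z.2.val = Nat.dist x.2.val z.2.val + 1 := by
    simp only [Nat.dist] at hadj ⊢; omega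
  rcases this with h | h
  · exact lemB' hX hx hx' hz hrow hadj hzrow h
  · exact lemB' hX hx' hx hz hrow.symm (by rwa [Nat.dist_comm]) (hrow ▸ hzrow) h

/-- Upper bound: any 1-ftmv set of the grid has at most `m` vertices. -/
lemma upper_bound (hm : 2 ≤ m) {X : Set (Fin m × Fin n)} (hX : IsFtmvSet (GG m n) 1 X) :
    X.ncard ≤ m := by
  by_cases hpair : ∃ x ∈ X, ∃ y ∈ X, x ≠ y ∧ x.1.val = y.1.val
  · obtain ⟨x, hx, y, hy, hxy, hrow⟩ := hpair
    have hXsub : X ⊆ {x, y} := by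
      intro z hz
      by_contra hzxy
      simp only [Set.mem_insert_iff, Set.mem_singleton_iff, not_or] at hzxy
      obtain ⟨hzx, hzy⟩ := hzxy
      by_cases hzr : z.1.val = x.1.val
      · have d1 := lemA hX hz hx hzx hzr
        have d2 := lemA hX hz hy hzy (hzr.trans hrow)
        have d3 := lemA hX hx hy hxy hrow
        have hzx2 : z.2.val ≠ x.2.val := fun h => hzx (prod_fin_eq hzr h)
        have hzy2 : z.2.val ≠ y.2.val := fun h => hzy (prod_fin_eq (hzr.trans hrow) h)
        simp only [Nat.dist] at d1 d2 d3; omega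
      · exact absurd (lemB hX hx hy hz hrow (lemA hX hx hy hxy hrow) hzr) id
    calc X.ncard ≤ ({x, y} : Set (Fin m × Fin n)).ncard :=
          Set.ncard_le_ncard hXsub (Set.toFinite _)
      _ ≤ 2 := by rw [Set.ncard_pair hxy]
      _ ≤ m := hm
  · push_neg at hpair
    have hinj : Set.InjOn Prod.fst X := by
      intro a ha b hb hab
      by_contra hne
      exact hpair a ha b hb hne (by rw [hab])
    calc X.ncard = (Prod.fst '' X).ncard := (Set.ncard_image_of_injOn hinj).symm
      _ ≤ (Set.univ : Set (Fin m)).ncard :=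
          Set.ncard_le_ncard (Set.subset_univ _) (Set.toFinite _)
      _ = m := by rw [Set.ncard_univ, Nat.card_eq_fintype_card, Fintype.card_fin]

/-- The diagonal is a 1-ftmv set. -/
lemma diag_ftmv (hmn : m ≤ n) :
    IsFtmvSet (GG m n) 1 {p : Fin m × Fin n | (p.1 : ℕ) = (p.2 : ℕ)} := by
  intro u hu v hv huv hnadj
  obtain ⟨i, a⟩ := u
  obtain ⟨j, b⟩ := v
  have hu' : i.val = a.val := hu
  have hv' : j.val = b.val := hv
  have hij : i.val ≠ j.val := by
    intro h
    exact huv (prod_fin_eq h (show a.val = b.val by omega))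
  have hab : a.val ≠ b.val := by omega
  set wA := (hWalk i a b).append (vWalk b i j) with hwA
  set wB := (vWalk a i j).append (hWalk j a b) with hwB
  have hlenA : wA.length = (GG m n).dist (i,a) (j,b) := by
    rw [hwA, length_append, hWalk_length, vWalk_length, grid_dist']; omega
  have hlenB : wB.length = (GG m n).dist (i,a) (j,b) := by
    rw [hwB, length_append, hWalk_length, vWalk_length, grid_dist']
  have hsuppA : ∀ w ∈ wA.support, w.1 = i ∨ w.2 = b := by
    intro w hw
    rw [hwA, support_append] at hw
    rcases List.mem_append.mp hw with h | h
    · exact Or.inl (hWalk_row i a b w h)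
    · exact Or.inr (vWalk_col b i j w (List.mem_of_mem_tail h))
  have hsuppB : ∀ w ∈ wB.support, w.2 = a ∨ w.1 = j := by
    intro w hw
    rw [hwB, support_append] at hw
    rcases List.mem_append.mp hw with h | h
    · exact Or.inl (vWalk_col a i j w h)
    · exact Or.inr (hWalk_row j a b w (List.mem_of_mem_tail h))
  have hnodupA : wA.support.Nodup := by
    rw [hwA, support_append, List.nodup_append]
    have hv2 := vWalk_nodup b i j
    rw [support_eq_cons] at hv2
    obtain ⟨hhead, htail⟩ := List.nodup_cons.mp hv2
    refine ⟨hWalk_nodup i a b, htail, fun w hw1 w' hw2 hww => ?_⟩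
    subst hww
    have hcol : w.2 = b := vWalk_col b i j w (List.mem_of_mem_tail hw2)
    have hrow' : w.1 = i := hWalk_row i a b w hw1
    have : w = (i, b) := Prod.ext hrow' hcol
    rw [this] at hw2
    exact hhead hw2
  have hnodupB : wB.support.Nodup := by
    rw [hwB, support_append, List.nodup_append]
    have hv2 := hWalk_nodup j a b
    rw [support_eq_cons] at hv2
    obtain ⟨hhead, htail⟩ := List.nodup_cons.mp hv2
    refine ⟨vWalk_nodup a i j, htail, fun w hw1 w' hw2 hww => ?_⟩
    subst hww
    have hrow' : w.1 = j := hWalk_row j a b w (List.mem_of_mem_tail hw2)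
    have hcol : w.2 = a := vWalk_col a i j w hw1
    have : w = (j, a) := Prod.ext hrow' hcol
    rw [this] at hw2
    exact hhead hw2
  have hcross : ∀ w, w ∈ wA.support → w ∈ wB.support → w = (i,a) ∨ w = (j,b) := by
    intro w h1 h2
    rcases hsuppA w h1 with ha1 | ha1 <;> rcases hsuppB w h2 with hb1 | hb1
    · exact Or.inl (Prod.ext ha1 hb1)
    · exact absurd (congrArg Fin.val (ha1.symm.trans hb1)) hij
    · exact absurd (congrArg Fin.val (hb1.symm.trans ha1)) hab
    · exact Or.inr (Prod.ext hb1 ha1)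
  have hXA : ∀ w ∈ wA.support, w.1.val = w.2.val → w = (i,a) ∨ w = (j,b) := by
    intro w hw hwX
    rcases hsuppA w hw with h | h
    · have h' : w.1.val = i.val := congrArg Fin.val h
      exact Or.inl (prod_fin_eq h' (show w.2.val = a.val by omega))
    · have h' : w.2.val = b.val := congrArg Fin.val h
      exact Or.inr (prod_fin_eq (show w.1.val = j.val by omega) h')
  have hXB : ∀ w ∈ wB.support, w.1.val = w.2.val → w = (i,a) ∨ w = (j,b) := by
    intro w hw hwX
    rcases hsuppB w hw with h | h
    · have h' : w.2.val = a.val := congrArg Fin.val h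
      exact Or.inl (prod_fin_eq (show w.1.val = i.val by omega) h')
    · have h' : w.1.val = j.val := congrArg Fin.val h
      exact Or.inr (prod_fin_eq h' (show w.2.val = b.val by omega))
  refine ⟨![⟨wA, (Walk.isPath_def _).mpr hnodupA⟩, ⟨wB, (Walk.isPath_def _).mpr hnodupB⟩],
    ?_, ?_, ?_⟩
  · intro t
    fin_cases t
    · exact hlenA
    · exact hlenB
  · intro t w hw hwX
    fin_cases t
    · exact hXA w hw hwX
    · exact hXB w hw hwX
  · intro t t' htt' w hw hw'
    fin_cases t <;> fin_cases t'
    · exact absurd rfl htt'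
    · exact hcross w hw hw'
    · exact hcross w hw' hw
    · exact absurd rfl htt'
  
end FtmvAux

theorem stmt15 (m n : ℕ) (hm : 2 ≤ m) (hmn : m ≤ n) :
    ftmvNum (pathGraph m □ pathGraph n) 1 = m ∧
    IsFtmvSet (pathGraph m □ pathGraph n) 1
      {p : Fin m × Fin n | (p.1 : ℕ) = (p.2 : ℕ)} := by
  have hdiag := FtmvAux.diag_ftmv (m := m) (n := n) hmn
  refine ⟨?_, hdiag⟩
  have hdcard : ({p : Fin m × Fin n | (p.1 : ℕ) = (p.2 : ℕ)}).ncard = m := by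
    have heq : {p : Fin m × Fin n | (p.1 : ℕ) = (p.2 : ℕ)} =
        Set.range (fun i : Fin m => ((i, ⟨i.val, lt_of_lt_of_le i.isLt hmn⟩) : Fin m × Fin n)) := by
      ext p
      simp only [Set.mem_setOf_eq, Set.mem_range]
      constructor
      · intro h
        exact ⟨p.1, FtmvAux.prod_fin_eq rfl h⟩
      · rintro ⟨i, rfl⟩; rfl
    have hinj : Function.Injective
        (fun i : Fin m => ((i, ⟨i.val, lt_of_lt_of_le i.isLt hmn⟩) : Fin m × Fin n)) := by
      intro a b h
      exact congrArg Prod.fst h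
    rw [heq, ← Set.image_univ, Set.ncard_image_of_injective _ hinj, Set.ncard_univ,
      Nat.card_eq_fintype_card, Fintype.card_fin]
  have hmem : m ∈ {k | ∃ X : Set (Fin m × Fin n),
      IsFtmvSet (pathGraph m □ pathGraph n) 1 X ∧ X.ncard = k} :=
    ⟨_, hdiag, hdcard⟩
  have hbdd : ∀ k ∈ {k | ∃ X : Set (Fin m × Fin n),
      IsFtmvSet (pathGraph m □ pathGraph n) 1 X ∧ X.ncard = k}, k ≤ m := by
    rintro k ⟨X, hX, rfl⟩
    exact FtmvAux.upper_bound hm hX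
  rw [ftmvNum]
  exact le_antisymm (csSup_le ⟨m, hmem⟩ hbdd) (le_csSup ⟨m, hbdd⟩ hmem)
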